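/- For x ∈ (0,1/2) and n ≥ 1, the function I_n(x) := \frac{(1-x)^n}{n} \sum_{j=0}^{n-1} (n-j)\binom{n-1+j}{j} x^j satisfies I_n(x) = \frac{1-2x}{1-x} + x \sum_{n'=n}^{\infty} \frac{1}{n'+1}\binom{2n'}{n'} (x(1-x))^{n'}. -/

import Mathlib

open Finset Filter Topology

lemma my_choose_le_two_pow (n k : ℕ) : n.choose k ≤ 2 ^ n := by
  rcases le_or_gt k n with h | h
  · calc n.choose k ≤ ∑ m ∈ range (n + 1), n.choose m :=
        Finset.single_le_sum (fun i _ => Nat.zero_le _) (Finset.mem_range.2 (Nat.lt_succ_of_le h))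
      _ = 2 ^ n := Nat.sum_range_choose n
  · simp [Nat.choose_eq_zero_of_lt h]

-- per-coefficient identity (♦)
lemma my_coef (M i : ℕ) (hi : i ≤ M) :
    ((M:ℝ) + 2) * ((M - i : ℕ) : ℝ) * ((M + i + 1).choose (i + 1) : ℝ)
      + ((M:ℝ) + 1) * ((M + 2 - i : ℕ) : ℝ) * ((M + i + 1).choose i : ℝ)
    = ((M:ℝ) + 1) * ((M + 1 - i : ℕ) : ℝ) * ((M + i + 2).choose (i + 1) : ℝ) := by
  have hp : (M + i + 2).choose (i + 1) = (M + i + 1).choose i + (M + i + 1).choose (i + 1) :=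
    Nat.choose_succ_succ' (M + i + 1) i ▸ rfl
  have hr : (M + i + 1).choose (i + 1) * (i + 1) = (M + i + 1).choose i * (M + 1) := by
    have := Nat.choose_succ_right_eq (M + i + 1) i
    simpa [Nat.add_sub_cancel, show M + i + 1 - i = M + 1 by omega] using this
  have h1 : ((M - i : ℕ) : ℝ) = (M : ℝ) - i := by
    rw [Nat.cast_sub hi]
  have h2 : ((M + 2 - i : ℕ) : ℝ) = (M : ℝ) + 2 - i := by
    rw [Nat.cast_sub (show i ≤ M + 2 by omega)]; push_cast; ring
  have h3 : ((M + 1 - i : ℕ) : ℝ) = (M : ℝ) + 1 - i := by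
    rw [Nat.cast_sub (show i ≤ M + 1 by omega)]; push_cast; ring
  have hpR : ((M + i + 2).choose (i + 1) : ℝ)
      = ((M + i + 1).choose i : ℝ) + ((M + i + 1).choose (i + 1) : ℝ) := by exact_mod_cast hp
  have hrR : ((M + i + 1).choose (i + 1) : ℝ) * ((i:ℝ) + 1)
      = ((M + i + 1).choose i : ℝ) * ((M:ℝ) + 1) := by exact_mod_cast hr
  rw [h1, h2, h3]
  linear_combination (-((M:ℝ) + 1) * ((M:ℝ) + 1 - i)) * hpR - hrR

lemma my_key (x : ℝ) (M : ℕ) :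
    ((M:ℝ) + 2) * ∑ j ∈ range (M + 3), ((M + 1 - j : ℕ) : ℝ) * ((M + j).choose j : ℝ) * x ^ j
      + ((M:ℝ) + 1) * ∑ j ∈ range (M + 3), ((M + 2 - j : ℕ) : ℝ) * ((M + 1 + j).choose j : ℝ) * x ^ (j + 1)
    = ((M:ℝ) + 1) * ∑ j ∈ range (M + 3), ((M + 2 - j : ℕ) : ℝ) * ((M + 1 + j).choose j : ℝ) * x ^ j
      + ((M:ℝ) + 1) * ((2 * M + 2).choose (M + 1) : ℝ) * x ^ (M + 2) := by
  rw [sum_range_succ, sum_range_succ (f := fun j => ((M + 2 - j : ℕ) : ℝ) * ((M + 1 + j).choose j : ℝ) * x ^ (j + 1)),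
      sum_range_succ (f := fun j => ((M + 2 - j : ℕ) : ℝ) * ((M + 1 + j).choose j : ℝ) * x ^ j)]
  simp only [show M + 1 - (M + 2) = 0 from by omega, show M + 2 - (M + 2) = 0 from by omega,
    Nat.cast_zero, zero_mul, add_zero]
  rw [sum_range_succ, sum_range_succ (f := fun j => ((M + 2 - j : ℕ) : ℝ) * ((M + 1 + j).choose j : ℝ) * x ^ (j + 1))]
  simp only [show M + 1 - (M + 1) = 0 from by omega, Nat.cast_zero, zero_mul, add_zero]
  simp only [show M + 2 - (M + 1) = 1 from by omega, show M + 1 + (M + 1) = 2 * M + 2 from by omega,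
    Nat.cast_one, one_mul]
  rw [sum_range_succ', sum_range_succ' (f := fun j => ((M + 2 - j : ℕ) : ℝ) * ((M + 1 + j).choose j : ℝ) * x ^ j)]
  have hext : ∑ i ∈ range (M + 1), ((M + 1 - (i + 1) : ℕ) : ℝ) * ((M + (i + 1)).choose (i + 1) : ℝ) * x ^ (i + 1)
      = ∑ i ∈ range M, ((M + 1 - (i + 1) : ℕ) : ℝ) * ((M + (i + 1)).choose (i + 1) : ℝ) * x ^ (i + 1) := by
    rw [sum_range_succ]
    simp
  rw [← hext]
  have main : ∑ i ∈ range (M + 1),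
        (((M:ℝ) + 2) * (((M + 1 - (i + 1) : ℕ) : ℝ) * ((M + (i + 1)).choose (i + 1) : ℝ) * x ^ (i + 1))
          + ((M:ℝ) + 1) * (((M + 2 - i : ℕ) : ℝ) * ((M + 1 + i).choose i : ℝ) * x ^ (i + 1)))
      = ∑ i ∈ range (M + 1),
        ((M:ℝ) + 1) * (((M + 2 - (i + 1) : ℕ) : ℝ) * ((M + 1 + (i + 1)).choose (i + 1) : ℝ) * x ^ (i + 1)) := by
    refine Finset.sum_congr rfl fun i hi => ?_
    have hiM : i ≤ M := by simpa using Nat.lt_succ_iff.mp (Finset.mem_range.mp hi)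
    simp only [show M + (i + 1) = M + i + 1 from by omega, show M + 1 + (i + 1) = M + i + 2 from by omega,
      show M + 1 + i = M + i + 1 from by omega, show M + 1 - (i + 1) = M - i from by omega,
      show M + 2 - (i + 1) = M + 1 - i from by omega]
    linear_combination x ^ (i + 1) * my_coef M i hiM
  rw [Finset.sum_add_distrib, ← Finset.mul_sum, ← Finset.mul_sum, ← Finset.mul_sum] at main
  simp only [Nat.sub_zero, Nat.add_zero, Nat.choose_zero_right, Nat.cast_one, pow_zero, mul_one]
  push_cast at main ⊢
  linear_combination main

noncomputable def myI (x : ℝ) (m : ℕ) : ℝ :=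
  (1 - x) ^ m / (m : ℝ) * ∑ j ∈ Finset.range m, ((m - j : ℕ) : ℝ) * ((m - 1 + j).choose j : ℝ) * x ^ j

lemma my_diff (x : ℝ) (M : ℕ) :
    myI x (M + 1) - myI x (M + 2)
      = x * (((2 * (M + 1)).choose (M + 1) : ℝ) / ((M : ℝ) + 1 + 1) * (x * (1 - x)) ^ (M + 1)) := by
  have hk := my_key x M
  have e1s : ∑ j ∈ range (M + 3), ((M + 1 - j : ℕ) : ℝ) * ((M + j).choose j : ℝ) * x ^ j
      = ∑ j ∈ range (M + 1), ((M + 1 - j : ℕ) : ℝ) * ((M + j).choose j : ℝ) * x ^ j := by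
    rw [sum_range_succ, sum_range_succ]
    norm_num [show M + 1 - (M + 2) = 0 from by omega, show M + 1 - (M + 1) = 0 from by omega]
  have e2s : ∑ j ∈ range (M + 3), ((M + 2 - j : ℕ) : ℝ) * ((M + 1 + j).choose j : ℝ) * x ^ j
      = ∑ j ∈ range (M + 2), ((M + 2 - j : ℕ) : ℝ) * ((M + 1 + j).choose j : ℝ) * x ^ j := by
    rw [sum_range_succ]
    norm_num [show M + 2 - (M + 2) = 0 from by omega]
  have e1 : myI x (M + 1) = (1 - x) ^ (M + 1) / ((M : ℝ) + 1)
      * ∑ j ∈ range (M + 3), ((M + 1 - j : ℕ) : ℝ) * ((M + j).choose j : ℝ) * x ^ j := by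
    unfold myI
    rw [e1s]
    simp only [Nat.add_sub_cancel]
    push_cast
    ring
  have e2 : myI x (M + 2) = (1 - x) ^ (M + 2) / ((M : ℝ) + 2)
      * ∑ j ∈ range (M + 3), ((M + 2 - j : ℕ) : ℝ) * ((M + 1 + j).choose j : ℝ) * x ^ j := by
    unfold myI
    rw [e2s]
    simp only [Nat.add_sub_cancel, show M + 2 - 1 = M + 1 from by omega]
    push_cast
    ring
  have e3 : ∑ j ∈ range (M + 3), ((M + 2 - j : ℕ) : ℝ) * ((M + 1 + j).choose j : ℝ) * x ^ (j + 1)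
      = (∑ j ∈ range (M + 3), ((M + 2 - j : ℕ) : ℝ) * ((M + 1 + j).choose j : ℝ) * x ^ j) * x := by
    rw [Finset.sum_mul]
    exact Finset.sum_congr rfl fun j _ => by ring
  rw [e3] at hk
  rw [e1, e2]
  have h1 : ((M : ℝ) + 1) ≠ 0 := by positivity
  have h2 : ((M : ℝ) + 2) ≠ 0 := by positivity
  have h3 : ((2 * (M + 1)).choose (M + 1) : ℝ) = ((2 * M + 2).choose (M + 1) : ℝ) := by
    norm_num [show 2 * (M + 1) = 2 * M + 2 from by omega]
  rw [h3, mul_pow]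
  field_simp
  linear_combination ((M : ℝ) + 2) * (1 - x) ^ (M + 1) * hk

lemma my_decomp (x : ℝ) (k : ℕ) :
    myI x (k + 1) = (1 - x) ^ (k + 1) * ∑ j ∈ range (k + 1), ((k + j).choose j : ℝ) * x ^ j
      - x * ((1 - x) ^ (k + 1) * ∑ i ∈ range k, ((k + 1 + i).choose i : ℝ) * x ^ i) := by
  unfold myI
  simp only [Nat.add_sub_cancel]
  have e3 : ∑ i ∈ range k, ((k + 1 + i).choose i : ℝ) * x ^ (i + 1)
      = (∑ i ∈ range k, ((k + 1 + i).choose i : ℝ) * x ^ i) * x := by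
    rw [Finset.sum_mul]
    exact Finset.sum_congr rfl fun j _ => by ring
  have key : ∑ j ∈ range (k + 1), ((k + 1 - j : ℕ) : ℝ) * ((k + j).choose j : ℝ) * x ^ j
      = ((k:ℝ) + 1) * ∑ j ∈ range (k + 1), ((k + j).choose j : ℝ) * x ^ j
        - ((k:ℝ) + 1) * ∑ i ∈ range k, ((k + 1 + i).choose i : ℝ) * x ^ (i + 1) := by
    rw [sum_range_succ' (f := fun j => ((k + 1 - j : ℕ) : ℝ) * ((k + j).choose j : ℝ) * x ^ j),
        sum_range_succ' (f := fun j => ((k + j).choose j : ℝ) * x ^ j)]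
    have per : ∀ i ∈ range k,
        ((k + 1 - (i + 1) : ℕ) : ℝ) * ((k + (i + 1)).choose (i + 1) : ℝ) * x ^ (i + 1)
          = ((k:ℝ) + 1) * (((k + (i + 1)).choose (i + 1) : ℝ) * x ^ (i + 1))
            - ((k:ℝ) + 1) * (((k + 1 + i).choose i : ℝ) * x ^ (i + 1)) := by
      intro i hi
      have hik : i < k := Finset.mem_range.mp hi
      have hr : (k + i + 1).choose (i + 1) * (i + 1) = (k + i + 1).choose i * (k + 1) := by
        have := Nat.choose_succ_right_eq (k + i + 1) i
        simpa [show k + i + 1 - i = k + 1 from by omega] using this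
      have hrR : ((k + i + 1).choose (i + 1) : ℝ) * ((i:ℝ) + 1)
          = ((k + i + 1).choose i : ℝ) * ((k:ℝ) + 1) := by exact_mod_cast hr
      have hc : ((k + 1 - (i + 1) : ℕ) : ℝ) = (k:ℝ) - i := by
        rw [show k + 1 - (i + 1) = k - i from by omega, Nat.cast_sub hik.le]
      rw [hc, show k + (i + 1) = k + i + 1 from by omega, show k + 1 + i = k + i + 1 from by omega]
      linear_combination -x ^ (i + 1) * hrR
    rw [Finset.sum_congr rfl per, Finset.sum_sub_distrib, ← Finset.mul_sum, ← Finset.mul_sum]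
    push_cast
    ring
  rw [key, e3]
  have hk1 : ((k:ℝ) + 1) ≠ 0 := by positivity
  push_cast
  field_simp

lemma my_B_tendsto (x : ℝ) (hx0 : 0 < x) (hx2 : x < 1/2) :
    Tendsto (fun k => (1 - x) ^ (k + 1) * ∑ j ∈ range (k + 1), ((k + j).choose j : ℝ) * x ^ j)
      atTop (nhds 1) := by
  have hx1 : x < 1 := by linarith
  have h1x : (0:ℝ) < 1 - x := by linarith
  have h2x : (0:ℝ) < 1 - 2 * x := by linarith
  have hxnorm : ‖x‖ < 1 := by rw [Real.norm_eq_abs, abs_of_pos hx0]; linarith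
  set f : ℕ → ℕ → ℝ := fun k j => ((j + k).choose k : ℝ) * x ^ j with hf
  have hsum : ∀ k : ℕ, HasSum (f k) (1 / (1 - x) ^ (k + 1)) := fun k =>
    hasSum_choose_mul_geometric_of_norm_lt_one k hxnorm
  have hcongr : ∀ k, ∑ j ∈ range (k + 1), ((k + j).choose j : ℝ) * x ^ j
      = ∑ j ∈ range (k + 1), f k j := by
    intro k
    refine Finset.sum_congr rfl fun j _ => ?_
    rw [hf]
    simp only
    rw [Nat.add_comm j k, Nat.choose_symm_add]
  set R : ℕ → ℝ := fun k => ∑' i, f k (i + (k + 1)) with hR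
  have hpart : ∀ k, ∑ j ∈ range (k + 1), f k j = 1 / (1 - x) ^ (k + 1) - R k := by
    intro k
    have := Summable.sum_add_tsum_nat_add (f := f k) (k + 1) (hsum k).summable
    rw [(hsum k).tsum_eq] at this
    linarith [this]
  set g : ℕ → ℝ := fun k => (1 - x) ^ (k + 1) * R k with hg
  have hBg : ∀ k, (1 - x) ^ (k + 1) * ∑ j ∈ range (k + 1), ((k + j).choose j : ℝ) * x ^ j
      = 1 - g k := by
    intro k
    rw [hcongr k, hpart k]
    have hp : (1 - x) ^ (k + 1) ≠ 0 := by positivity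
    field_simp [hg]
    rfl
  have hRsum : ∀ k, Summable (fun i => f k (i + (k + 1))) := fun k =>
    (summable_nat_add_iff (k + 1)).mpr (hsum k).summable
  have hupper : ∀ k, Summable (fun i : ℕ => (2 ^ (2 * k + 1) * x ^ (k + 1)) * (2 * x) ^ i) := by
    intro k
    exact (summable_geometric_of_lt_one (by linarith) (by linarith)).mul_left _
  have hg0 : Tendsto g atTop (nhds 0) := by
    have hgnn : ∀ k, 0 ≤ g k := by
      intro k
      apply mul_nonneg (by positivity)
      exact tsum_nonneg fun i => by positivity
    have hgle : ∀ k, g k ≤ (4 * (x * (1 - x))) ^ (k + 1) * (1 / (2 * (1 - 2 * x))) := by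
      intro k
      have hle : ∀ i : ℕ, f k (i + (k + 1)) ≤ (2 ^ (2 * k + 1) * x ^ (k + 1)) * (2 * x) ^ i := by
        intro i
        rw [hf]
        simp only
        have hb : ((i + (k + 1) + k).choose k : ℝ) ≤ 2 ^ (i + (k + 1) + k) := by
          exact_mod_cast my_choose_le_two_pow (i + (k + 1) + k) k
        have hxp : (0:ℝ) < x ^ (i + (k + 1)) := by positivity
        calc ((i + (k + 1) + k).choose k : ℝ) * x ^ (i + (k + 1))
            ≤ 2 ^ (i + (k + 1) + k) * x ^ (i + (k + 1)) :=
              mul_le_mul_of_nonneg_right hb hxp.le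
          _ = (2 ^ (2 * k + 1) * x ^ (k + 1)) * (2 * x) ^ i := by
              rw [mul_pow, show i + (k + 1) + k = (2 * k + 1) + i from by omega, pow_add,
                show i + (k + 1) = (k + 1) + i from by omega, pow_add]
              ring
      have hRle : R k ≤ 2 ^ (2 * k + 1) * x ^ (k + 1) * (1 - 2 * x)⁻¹ := by
        have h2 := Summable.tsum_le_tsum hle (hRsum k) (hupper k)
        rw [tsum_mul_left, tsum_geometric_of_lt_one (by linarith) (by linarith)] at h2
        simpa [hR, mul_assoc] using h2
      have hfinal : (1 - x) ^ (k + 1) * (2 ^ (2 * k + 1) * x ^ (k + 1) * (1 - 2 * x)⁻¹)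
          = (4 * (x * (1 - x))) ^ (k + 1) * (1 / (2 * (1 - 2 * x))) := by
        have h2pow : (2:ℝ) ^ (2 * k + 1) = 4 ^ (k + 1) / 2 := by
          have h4 : (4:ℝ) ^ (k + 1) = 2 ^ (2 * (k + 1)) := by
            rw [pow_mul]; norm_num
          rw [h4, show 2 * (k + 1) = (2 * k + 1) + 1 from by omega, pow_succ]
          ring
        rw [mul_pow, mul_pow, h2pow]
        field_simp
      calc g k ≤ (1 - x) ^ (k + 1) * (2 ^ (2 * k + 1) * x ^ (k + 1) * (1 - 2 * x)⁻¹) :=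
            mul_le_mul_of_nonneg_left hRle (by positivity)
        _ = _ := hfinal
    have hu : Tendsto (fun k : ℕ => (4 * (x * (1 - x))) ^ (k + 1) * (1 / (2 * (1 - 2 * x))))
        atTop (nhds 0) := by
      have h4t0 : (0:ℝ) ≤ 4 * (x * (1 - x)) := by positivity
      have h4t1 : 4 * (x * (1 - x)) < 1 := by nlinarith [sq_nonneg (1 - 2 * x)]
      have := (tendsto_pow_atTop_nhds_zero_of_lt_one h4t0 h4t1).mul_const
        ((4 * (x * (1 - x))) * (1 / (2 * (1 - 2 * x))))
      rw [zero_mul] at this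
      refine this.congr fun k => ?_
      rw [pow_succ]
      ring
    exact squeeze_zero hgnn hgle hu
  have hT : Tendsto (fun k : ℕ => 1 - g k) atTop (nhds (1 - 0)) :=
    Tendsto.sub tendsto_const_nhds hg0
  rw [sub_zero] at hT
  exact hT.congr fun k => (hBg k).symm

lemma my_I_tendsto (x : ℝ) (hx0 : 0 < x) (hx2 : x < 1/2) :
    Tendsto (fun m => myI x m) atTop (nhds ((1 - 2 * x) / (1 - x))) := by
  have hx1 : x < 1 := by linarith
  have h1x : (0:ℝ) < 1 - x := by linarith
  rw [← tendsto_add_atTop_iff_nat 1]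
  set B : ℕ → ℝ := fun k => (1 - x) ^ (k + 1) * ∑ j ∈ range (k + 1), ((k + j).choose j : ℝ) * x ^ j
    with hBdef
  set D : ℕ → ℝ := fun k => (1 - x) ^ (k + 1) * ∑ i ∈ range k, ((k + 1 + i).choose i : ℝ) * x ^ i
    with hDdef
  have hB : Tendsto B atTop (nhds 1) := my_B_tendsto x hx0 hx2
  set E1 : ℕ → ℝ := fun k => (1 - x) ^ (k + 1) * ((2 * k + 1).choose k : ℝ) * x ^ k with hE1def
  set E2 : ℕ → ℝ := fun k => (1 - x) ^ (k + 1) * ((2 * k + 2).choose (k + 1) : ℝ) * x ^ (k + 1)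
    with hE2def
  have hrel : ∀ k, D k = B (k + 1) * (1 / (1 - x)) - E1 k - E2 k := by
    intro k
    rw [hBdef, hDdef, hE1def, hE2def]
    simp only
    rw [sum_range_succ, sum_range_succ]
    rw [show k + 1 + k = 2 * k + 1 from by omega, show (k + 1) + (k + 1) = 2 * k + 2 from by omega]
    have hne : (1 - x) ≠ 0 := ne_of_gt h1x
    field_simp
    ring
  have h4t0 : (0:ℝ) ≤ 4 * (x * (1 - x)) := by positivity
  have h4t1 : 4 * (x * (1 - x)) < 1 := by nlinarith [sq_nonneg (1 - 2 * x)]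
  have hpow : Tendsto (fun k : ℕ => (4 * (x * (1 - x))) ^ k) atTop (nhds 0) :=
    tendsto_pow_atTop_nhds_zero_of_lt_one h4t0 h4t1
  have hE1le : ∀ k, E1 k ≤ 2 * (4 * (x * (1 - x))) ^ k := by
    intro k
    have hb : ((2 * k + 1).choose k : ℝ) ≤ 2 ^ (2 * k + 1) :=
      by exact_mod_cast my_choose_le_two_pow (2 * k + 1) k
    have e : (1 - x) ^ (k + 1) * (2:ℝ) ^ (2 * k + 1) * x ^ k
        = 2 * (1 - x) * (4 * (x * (1 - x))) ^ k := by
      rw [pow_succ (1 - x), show 2 * k + 1 = 2 * k + 1 from rfl, pow_add, pow_mul, mul_pow,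
        mul_pow]
      norm_num
      ring
    calc E1 k ≤ (1 - x) ^ (k + 1) * (2:ℝ) ^ (2 * k + 1) * x ^ k := by
          rw [hE1def]
          simp only
          have : (0:ℝ) ≤ (1 - x) ^ (k + 1) := by positivity
          have hx0k : (0:ℝ) ≤ x ^ k := by positivity
          nlinarith [mul_nonneg this hx0k]
      _ = 2 * (1 - x) * (4 * (x * (1 - x))) ^ k := e
      _ ≤ 2 * (4 * (x * (1 - x))) ^ k := by
          have : (0:ℝ) ≤ (4 * (x * (1 - x))) ^ k := by positivity
          nlinarith
  have hE2le : ∀ k, E2 k ≤ 4 * (4 * (x * (1 - x))) ^ k := by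
    intro k
    have hb : ((2 * k + 2).choose (k + 1) : ℝ) ≤ 2 ^ (2 * k + 2) :=
      by exact_mod_cast my_choose_le_two_pow (2 * k + 2) (k + 1)
    have e : (1 - x) ^ (k + 1) * (2:ℝ) ^ (2 * k + 2) * x ^ (k + 1)
        = 4 * (x * (1 - x)) * (4 * (x * (1 - x))) ^ k := by
      rw [pow_succ (1 - x), pow_succ x, show 2 * k + 2 = 2 * k + 2 from rfl, pow_add, pow_mul,
        mul_pow, mul_pow]
      norm_num
      ring
    calc E2 k ≤ (1 - x) ^ (k + 1) * (2:ℝ) ^ (2 * k + 2) * x ^ (k + 1) := by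
          rw [hE2def]
          simp only
          have h1 : (0:ℝ) ≤ (1 - x) ^ (k + 1) := by positivity
          have h2 : (0:ℝ) ≤ x ^ (k + 1) := by positivity
          nlinarith [mul_nonneg h1 h2]
      _ = 4 * (x * (1 - x)) * (4 * (x * (1 - x))) ^ k := e
      _ ≤ 4 * (4 * (x * (1 - x))) ^ k := by
          have : (0:ℝ) ≤ (4 * (x * (1 - x))) ^ k := by positivity
          nlinarith
  have hE1nn : ∀ k, 0 ≤ E1 k := by
    intro k
    rw [hE1def]
    simp only
    positivity
  have hE2nn : ∀ k, 0 ≤ E2 k := by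
    intro k
    rw [hE2def]
    simp only
    positivity
  have hE1t : Tendsto E1 atTop (nhds 0) := by
    refine squeeze_zero hE1nn hE1le ?_
    have := hpow.const_mul (2:ℝ)
    simpa using this
  have hE2t : Tendsto E2 atTop (nhds 0) := by
    refine squeeze_zero hE2nn hE2le ?_
    have := hpow.const_mul (4:ℝ)
    simpa using this
  have hBs : Tendsto (fun k => B (k + 1)) atTop (nhds 1) := hB.comp (tendsto_add_atTop_nat 1)
  have hD : Tendsto D atTop (nhds (1 / (1 - x))) := by
    have h := ((hBs.mul_const (1 / (1 - x))).sub hE1t).sub hE2t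
    rw [sub_zero, sub_zero, one_mul] at h
    exact h.congr fun k => (hrel k).symm
  have hfin : Tendsto (fun k => B k - x * D k) atTop (nhds (1 - x * (1 / (1 - x)))) :=
    hB.sub (hD.const_mul x)
  have hval : 1 - x * (1 / (1 - x)) = (1 - 2 * x) / (1 - x) := by
    field_simp
    ring
  rw [hval] at hfin
  exact hfin.congr fun k => (my_decomp x k).symm

theorem stmt_7 (x : ℝ) (hx : x ∈ Set.Ioo (0:ℝ) (1/2)) (n : ℕ) (hn : 1 ≤ n) :
    (1 - x) ^ n / (n : ℝ) *
        ∑ j ∈ Finset.range n, ((n - j : ℕ) : ℝ) * ((n - 1 + j).choose j : ℝ) * x ^ j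
      = (1 - 2 * x) / (1 - x) +
        x * ∑' k : ℕ, ((2 * (n + k)).choose (n + k) : ℝ) / ((n : ℝ) + (k : ℝ) + 1) *
          (x * (1 - x)) ^ (n + k) := by
  obtain ⟨hx0, hx2⟩ := hx
  set f : ℕ → ℝ := fun m => ((2 * m).choose m : ℝ) / ((m : ℝ) + 1) * (x * (1 - x)) ^ m with hfdef
  obtain ⟨N, rfl⟩ : ∃ N, n = N + 1 := ⟨n - 1, by omega⟩
  have htel : ∀ K : ℕ, ∑ k ∈ Finset.range K, x * f (N + 1 + k)
      = myI x (N + 1) - myI x (N + 1 + K) := by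
    intro K
    induction K with
    | zero => simp
    | succ K ih =>
      rw [Finset.sum_range_succ, ih]
      have hd := my_diff x (N + K)
      have harg : myI x (N + 1 + K) - myI x (N + 1 + (K + 1)) = x * f (N + 1 + K) := by
        rw [show N + 1 + (K + 1) = N + K + 2 from by omega,
          show N + 1 + K = N + K + 1 from by omega, hfdef]
        simp only
        rw [show N + K + 2 = N + K + 1 + 1 from by omega, hd]
        push_cast
        ring
      linarith [harg]
  have hfnn : ∀ k : ℕ, 0 ≤ x * f (N + 1 + k) := by
    intro k
    rw [hfdef]
    simp only
    have h1x : (0:ℝ) < 1 - x := by linarith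
    positivity
  have hlim : Tendsto (fun K => myI x (N + 1 + K)) atTop (nhds ((1 - 2 * x) / (1 - x))) := by
    have h := (my_I_tendsto x hx0 hx2).comp (tendsto_add_atTop_nat (N + 1))
    exact h.congr fun K => by simp [Function.comp, Nat.add_comm]
  have hHS : HasSum (fun k => x * f (N + 1 + k)) (myI x (N + 1) - (1 - 2 * x) / (1 - x)) := by
    rw [hasSum_iff_tendsto_nat_of_nonneg hfnn]
    have h := tendsto_const_nhds (x := myI x (N + 1)) (f := atTop (α := ℕ)) |>.sub hlim
    exact h.congr fun K => (htel K).symm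
  have hts : ∑' k : ℕ, ((2 * (N + 1 + k)).choose (N + 1 + k) : ℝ)
        / (((N + 1 : ℕ) : ℝ) + (k : ℝ) + 1) * (x * (1 - x)) ^ (N + 1 + k)
      = ∑' k : ℕ, f (N + 1 + k) := by
    refine tsum_congr fun k => ?_
    rw [hfdef]
    simp only
    push_cast
    ring_nf
  have hxts : x * ∑' k : ℕ, f (N + 1 + k) = ∑' k : ℕ, x * f (N + 1 + k) := by
    rw [tsum_mul_left]
  have : (1 - x) ^ (N + 1) / ((N + 1 : ℕ) : ℝ) *
      ∑ j ∈ Finset.range (N + 1), ((N + 1 - j : ℕ) : ℝ) * ((N + 1 - 1 + j).choose j : ℝ) * x ^ j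
      = myI x (N + 1) := rfl
  rw [this, hts, hxts, hHS.tsum_eq]
  ring
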